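/- Let b = p₁^{a₁}⋯p_n^{a_n} with n ≥ 2 distinct primes and a_i ≥ 1. In the ACM M_{b,b}, for every element of the form b^k·m with k ≥ 2 and b ∤ m, and every integer c with 2 ≤ c ≤ k, there exists a factorization of b^k·m into exactly c irreducibles of M_{b,b}. Consequently LD(M_{b,b}) = 1. -/

import Mathlib

/-- Membership in the arithmetical congruence monoid `M_{a,b} = (a + b ℕ₀) ∪ {1}`. -/
def acmMem (a b x : ℕ) : Prop := x = 1 ∨ ∃ k : ℕ, x = a + k * b

/-- `x` is an atom (irreducible) of `M_{a,b}`. -/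
def acmAtom (a b x : ℕ) : Prop :=
  acmMem a b x ∧ x ≠ 1 ∧
    ∀ y z : ℕ, acmMem a b y → acmMem a b z → x = y * z → y = 1 ∨ z = 1

/-- `s` is a factorization of `x` into atoms of `M_{a,b}`. -/
def acmFactorization (a b x : ℕ) (s : Multiset ℕ) : Prop :=
  (∀ u ∈ s, acmAtom a b u) ∧ s.prod = x

/-- The distance between two factorizations. -/
def facDist (s t : Multiset ℕ) : ℕ := max (Multiset.card (s - t)) (Multiset.card (t - s))

/-- There is an `N`-chain of factorizations of `x` from `z₁` to `z₂` in `M_{a,b}`. -/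
def acmNChain (a b x N : ℕ) (z₁ z₂ : Multiset ℕ) : Prop :=
  ∃ L : List (Multiset ℕ), L ≠ [] ∧ L.head? = some z₁ ∧ L.getLast? = some z₂ ∧
    (∀ z ∈ L, acmFactorization a b x z) ∧ L.Chain' (fun s t => facDist s t ≤ N)

/-- The set of `N` such that any two factorizations of any element of `M_{a,b}`
are connected by an `N`-chain; `c(M) = n` iff `n` is the least element of this set. -/
def acmCatSet (a b : ℕ) : Set ℕ :=
  {N | ∀ x, acmMem a b x → ∀ z₁ z₂, acmFactorization a b x z₁ →
      acmFactorization a b x z₂ → acmNChain a b x N z₁ z₂}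

/-- Divisibility inside the monoid `M_{a,b}`. -/
def acmDvd (a b x y : ℕ) : Prop := ∃ k, acmMem a b k ∧ x * k = y

/-- `s` is a bullet of `x` in `M_{a,b}`. -/
def acmBullet (a b x : ℕ) (s : Multiset ℕ) : Prop :=
  (∀ u ∈ s, acmAtom a b u) ∧ acmDvd a b x s.prod ∧
    ∀ t : Multiset ℕ, t ≤ s → t ≠ s → ¬ acmDvd a b x t.prod

/-- Omega primality of `x` in `M_{a,b}`: the sup of the lengths of bullets of `x`. -/
noncomputable def acmOmega (a b x : ℕ) : ℕ∞ :=
  sSup {n : ℕ∞ | ∃ s : Multiset ℕ, acmBullet a b x s ∧ (Multiset.card s : ℕ∞) = n}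

/-- The set of factorization lengths of `x` in `M_{a,b}`. -/
def acmLengthSet (a b x : ℕ) : Set ℕ :=
  {n | ∃ s : Multiset ℕ, acmFactorization a b x s ∧ Multiset.card s = n}

/-- `x` has at least two distinct factorization lengths. -/
def acmLI (a b x : ℕ) : Prop := ∃ m ∈ acmLengthSet a b x, ∃ n ∈ acmLengthSet a b x, m ≠ n

/-- The length density of an element `x` of `M_{a,b}`. -/
noncomputable def acmLD (a b x : ℕ) : ℝ :=
  (((acmLengthSet a b x).ncard : ℝ) - 1) /
    (((sSup (acmLengthSet a b x) : ℕ) : ℝ) - ((sInf (acmLengthSet a b x) : ℕ) : ℝ))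


lemma acm_mem_iff {b : ℕ} (hb : 1 ≤ b) {x : ℕ} :
    acmMem b b x ↔ x = 1 ∨ (x ≠ 0 ∧ b ∣ x) := by
  constructor
  · rintro (rfl | ⟨k, rfl⟩)
    · exact Or.inl rfl
    · exact Or.inr ⟨by positivity, ⟨k + 1, by ring⟩⟩
  · rintro (rfl | ⟨hx0, j, rfl⟩)
    · exact Or.inl rfl
    · right
      have hj : 1 ≤ j := by
        rcases Nat.eq_zero_or_pos j with h | h
        · simp [h] at hx0
        · exact h
      obtain ⟨t, rfl⟩ := Nat.exists_eq_add_of_le hj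
      exact ⟨t, by ring⟩

lemma acm_atom_iff {b : ℕ} (hb : 2 ≤ b) {x : ℕ} :
    acmAtom b b x ↔ x ≠ 0 ∧ b ∣ x ∧ ¬ b * b ∣ x := by
  have hb1 : 1 ≤ b := by omega
  constructor
  · rintro ⟨hmem, hx1, hirr⟩
    rcases (acm_mem_iff hb1).mp hmem with rfl | ⟨hx0, hbx⟩
    · exact absurd rfl hx1
    refine ⟨hx0, hbx, ?_⟩
    rintro ⟨t, rfl⟩
    have ht : t ≠ 0 := by rintro rfl; simp at hx0
    have h1 : acmMem b b b := (acm_mem_iff hb1).mpr (Or.inr ⟨by omega, dvd_rfl⟩)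
    have h2 : acmMem b b (b * t) := (acm_mem_iff hb1).mpr
      (Or.inr ⟨by positivity, Dvd.intro t rfl⟩)
    rcases hirr b (b * t) h1 h2 (by ring) with h | h
    · omega
    · have : b ≤ 1 := Nat.le_of_dvd one_pos ⟨t, h.symm⟩
      omega
  · rintro ⟨hx0, hbx, hnb2⟩
    refine ⟨(acm_mem_iff hb1).mpr (Or.inr ⟨hx0, hbx⟩), ?_, ?_⟩
    · rintro rfl
      exact absurd (Nat.le_of_dvd one_pos hbx) (by omega)
    · intro y z hy hz hxyz
      rcases (acm_mem_iff hb1).mp hy with rfl | ⟨hy0, hby⟩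
      · exact Or.inl rfl
      rcases (acm_mem_iff hb1).mp hz with rfl | ⟨hz0, hbz⟩
      · exact Or.inr rfl
      exact absurd (hxyz ▸ mul_dvd_mul hby hbz) hnb2

lemma acm_exists_fac {b : ℕ} (hb : 2 ≤ b.primeFactors.card) :
    ∀ k m c : ℕ, m ≠ 0 → 2 ≤ c → c ≤ k →
      ∃ s : Multiset ℕ, acmFactorization b b (b ^ k * m) s ∧ Multiset.card s = c := by
  obtain ⟨p, hp, q, hq, hpq⟩ := Finset.one_lt_card.mp hb
  have hpp := Nat.prime_of_mem_primeFactors hp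
  have hqp := Nat.prime_of_mem_primeFactors hq
  have hpb := Nat.dvd_of_mem_primeFactors hp
  have hqb := Nat.dvd_of_mem_primeFactors hq
  have hb0 : b ≠ 0 := by rintro rfl; simp at hp
  have hb2 : 2 ≤ b := le_trans hpp.two_le (Nat.le_of_dvd (Nat.pos_of_ne_zero hb0) hpb)
  intro k m c hm hc hck
  set N := b ^ (k - c) * m with hN
  have hN0 : N ≠ 0 := mul_ne_zero (pow_ne_zero _ hb0) hm
  set t₁ := p ^ N.factorization p with ht₁
  set t₂ := N / t₁ with ht₂
  have hmul : t₁ * t₂ = N := Nat.ordProj_mul_ordCompl_eq_self N p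
  have ht₁0 : t₁ ≠ 0 := pow_ne_zero _ hpp.pos.ne'
  have ht₂0 : t₂ ≠ 0 := (Nat.ordCompl_pos p hN0).ne'
  have atom_b : acmAtom b b b := by
    rw [acm_atom_iff hb2]
    refine ⟨hb0, dvd_rfl, fun h => ?_⟩
    have := Nat.le_of_dvd (Nat.pos_of_ne_zero hb0) h
    nlinarith
  have atom1 : acmAtom b b (b * t₁) := by
    rw [acm_atom_iff hb2]
    refine ⟨mul_ne_zero hb0 ht₁0, Dvd.intro t₁ rfl, fun h => ?_⟩
    have hbt : b ∣ t₁ := (mul_dvd_mul_iff_left hb0).mp h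
    have : q ∣ t₁ := hqb.trans hbt
    exact hpq ((Nat.prime_dvd_prime_iff_eq hqp hpp).mp (hqp.dvd_of_dvd_pow this)).symm
  have atom2 : acmAtom b b (b * t₂) := by
    rw [acm_atom_iff hb2]
    refine ⟨mul_ne_zero hb0 ht₂0, Dvd.intro t₂ rfl, fun h => ?_⟩
    have hbt : b ∣ t₂ := (mul_dvd_mul_iff_left hb0).mp h
    exact Nat.not_dvd_ordCompl hpp hN0 (hpb.trans hbt)
  refine ⟨Multiset.replicate (c - 2) b + {b * t₁, b * t₂}, ⟨?_, ?_⟩, ?_⟩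
  · intro u hu
    rcases Multiset.mem_add.mp hu with h | h
    · rw [Multiset.eq_of_mem_replicate h]; exact atom_b
    · rcases Multiset.mem_cons.mp h with rfl | h
      · exact atom1
      · rw [Multiset.mem_singleton.mp h]; exact atom2
  · rw [Multiset.prod_add, Multiset.prod_replicate]
    have e1 : (c - 2) + 2 = c := by omega
    have e2 : c + (k - c) = k := by omega
    calc b ^ (c - 2) * ({b * t₁, b * t₂} : Multiset ℕ).prod
        = b ^ ((c - 2) + 2) * (t₁ * t₂) := by
          simp only [Multiset.insert_eq_cons, Multiset.prod_cons, Multiset.prod_singleton]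
          ring
      _ = b ^ c * N := by rw [e1, hmul]
      _ = b ^ (c + (k - c)) * m := by rw [hN]; ring
      _ = b ^ k * m := by rw [e2]
  · simp only [Multiset.card_add, Multiset.card_replicate, Multiset.insert_eq_cons,
      Multiset.card_cons, Multiset.card_singleton]
    omega

lemma acm_pow_card_dvd {b : ℕ} (hb : 2 ≤ b) {x : ℕ} {s : Multiset ℕ}
    (h : acmFactorization b b x s) : b ^ (Multiset.card s) ∣ x := by
  obtain ⟨hatoms, hprod⟩ := h
  subst hprod
  induction s using Multiset.induction_on with
  | empty => simp
  | cons a s ih =>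
    simp only [Multiset.card_cons, Multiset.prod_cons, pow_succ, mul_comm (b ^ Multiset.card s) b]
    have ha := ((acm_atom_iff hb).mp (hatoms a (Multiset.mem_cons_self a s))).2.1
    exact mul_dvd_mul ha (ih fun u hu => hatoms u (Multiset.mem_cons_of_mem hu))

lemma acm_fac_one {b : ℕ} {s : Multiset ℕ} (h : acmFactorization b b 1 s) :
    s = 0 := by
  obtain ⟨hatoms, hprod⟩ := h
  refine Multiset.eq_zero_of_forall_notMem fun u hu => ?_
  have h1 : u ∣ 1 := hprod ▸ Multiset.dvd_prod hu
  exact (hatoms u hu).2.1 (Nat.eq_one_of_dvd_one h1)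

lemma acm_lengthSet_eq {b : ℕ} (hb : 2 ≤ b.primeFactors.card) {x : ℕ}
    (hx : acmMem b b x) (hLI : acmLI b b x) :
    ∃ K : ℕ, 3 ≤ K ∧ acmLengthSet b b x = Set.Icc 2 K := by
  have hb2 : 2 ≤ b := by
    by_contra h
    interval_cases b <;> simp_all
  obtain ⟨c₁, ⟨s₁, hs₁, hc₁⟩, c₂, ⟨s₂, hs₂, hc₂⟩, hcc⟩ := hLI
  have hx1 : x ≠ 1 := by
    rintro rfl
    rw [← hc₁, acm_fac_one hs₁, ← hc₂, acm_fac_one hs₂] at hcc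
    exact hcc rfl
  obtain ⟨hx0, hbx⟩ : x ≠ 0 ∧ b ∣ x := by
    rcases (acm_mem_iff (by omega)).mp hx with rfl | h
    · exact absurd rfl hx1
    · exact h
  -- the maximal power of b dividing x
  have hbdd : BddAbove {n | b ^ n ∣ x} := by
    refine ⟨x, fun n hn => ?_⟩
    calc n ≤ b ^ n := Nat.le_of_lt (Nat.lt_pow_self (n := n) hb2)
      _ ≤ x := Nat.le_of_dvd (Nat.pos_of_ne_zero hx0) hn
  set K := sSup {n | b ^ n ∣ x} with hK
  have hKmem : b ^ K ∣ x := Nat.sSup_mem ⟨1, by simpa using hbx⟩ hbdd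
  have hKmax : ∀ n, b ^ n ∣ x → n ≤ K := fun n hn => le_csSup hbdd hn
  -- every length is in [2, K] (once we rule out lengths 0 and 1)
  have hsub : ∀ c ∈ acmLengthSet b b x, c ≤ K ∧ c ≠ 0 ∧ (c = 1 → ¬ b * b ∣ x) := by
    rintro c ⟨s, hs, rfl⟩
    refine ⟨hKmax _ (acm_pow_card_dvd hb2 hs), ?_, ?_⟩
    · rintro h
      rw [Multiset.card_eq_zero] at h
      subst h
      exact hx1 hs.2.symm
    · intro h
      rw [Multiset.card_eq_one] at h
      obtain ⟨a, rfl⟩ := h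
      have := (acm_atom_iff hb2).mp (hs.1 a (Multiset.mem_singleton_self a))
      rw [← hs.2, Multiset.prod_singleton]
      exact this.2.2
  have h1notin : (1 : ℕ) ∉ acmLengthSet b b x := by
    intro h1
    have hnb2 := (hsub 1 h1).2.2 rfl
    -- then both lengths are ≤ 1, contradicting distinctness
    have key : ∀ c ∈ acmLengthSet b b x, c = 1 := by
      intro c hc
      obtain ⟨hcK, hc0, -⟩ := hsub c hc
      by_contra hne
      have h2c : 2 ≤ c := by omega
      obtain ⟨s, hs, rfl⟩ := hc
      have : b ^ 2 ∣ x := dvd_trans (pow_dvd_pow b h2c) (acm_pow_card_dvd hb2 hs)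
      rw [pow_two] at this
      exact hnb2 this
    rw [key c₁ ⟨s₁, hs₁, hc₁⟩, key c₂ ⟨s₂, hs₂, hc₂⟩] at hcc
    exact hcc rfl
  have hsub2 : acmLengthSet b b x ⊆ Set.Icc 2 K := by
    intro c hc
    obtain ⟨hcK, hc0, -⟩ := hsub c hc
    have : c ≠ 1 := fun h => h1notin (h ▸ hc)
    exact ⟨by omega, hcK⟩
  -- decomposition x = b ^ K * m
  set m := x / b ^ K with hm
  have hxm : x = b ^ K * m := (Nat.mul_div_cancel' hKmem).symm
  have hm0 : m ≠ 0 := by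
    rintro h
    rw [h, mul_zero] at hxm
    exact hx0 hxm
  have hsup : Set.Icc 2 K ⊆ acmLengthSet b b x := by
    rintro c ⟨h2c, hcK⟩
    obtain ⟨s, hs, hcard⟩ := acm_exists_fac hb K m c hm0 h2c hcK
    exact ⟨s, by rwa [← hxm] at hs, hcard⟩
  have hK3 : 3 ≤ K := by
    have h1 := hsub2 ⟨s₁, hs₁, hc₁⟩
    have h2 := hsub2 ⟨s₂, hs₂, hc₂⟩
    simp only [Set.mem_Icc] at h1 h2
    omega
  exact ⟨K, hK3, Set.Subset.antisymm hsub2 hsup⟩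

lemma acm_LD_eq_one {b : ℕ} (hb : 2 ≤ b.primeFactors.card) {x : ℕ}
    (hx : acmMem b b x) (hLI : acmLI b b x) : acmLD b b x = 1 := by
  obtain ⟨K, hK3, hset⟩ := acm_lengthSet_eq hb hx hLI
  have hncard : (acmLengthSet b b x).ncard = K - 1 := by
    rw [hset, ← Finset.coe_Icc, Set.ncard_coe_finset, Nat.card_Icc]
    omega
  have hsup : sSup (acmLengthSet b b x) = K := by
    rw [hset]
    exact csSup_Icc (by omega)
  have hinf : sInf (acmLengthSet b b x) = 2 := by
    rw [hset]
    exact csInf_Icc (by omega)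
  rw [acmLD, hncard, hsup, hinf]
  have : ((K - 1 : ℕ) : ℝ) = (K : ℝ) - 1 := by
    have : 1 ≤ K := by omega
    push_cast [this]; ring
  rw [this]
  have hKne : (K : ℝ) - 2 ≠ 0 := by
    have : (3 : ℝ) ≤ (K : ℝ) := by exact_mod_cast hK3
    intro h; nlinarith
  rw [div_eq_one_iff_eq (by push_cast; exact hKne)]
  push_cast
  ring

/-- For `b` with at least two distinct prime factors, every `b^k·m ∈ M_{b,b}`
with `k ≥ 2`, `b ∤ m` has a factorization into exactly `c` irreducibles for each
`2 ≤ c ≤ k`; consequently `LD(M_{b,b}) = 1`. -/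
theorem Mbb_length_density (b : ℕ) (hb : 2 ≤ b.primeFactors.card) :
    (∀ k m c : ℕ, 2 ≤ k → ¬ b ∣ m → 2 ≤ c → c ≤ k →
      ∃ s : Multiset ℕ, acmFactorization b b (b ^ k * m) s ∧ Multiset.card s = c) ∧
    sInf {r : ℝ | ∃ x : ℕ, acmMem b b x ∧ acmLI b b x ∧ r = acmLD b b x} = 1 := by
  have hb2 : 2 ≤ b := by
    by_contra h
    interval_cases b <;> simp_all
  constructor
  · intro k m c _ hbm hc hck
    exact acm_exists_fac hb k m c (fun h => hbm (h ▸ dvd_zero b)) hc hck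
  · have hmem : acmMem b b (b ^ 3) := (acm_mem_iff (by omega)).mpr
      (Or.inr ⟨pow_ne_zero 3 (by omega), dvd_pow_self b (by omega)⟩)
    have hLI : acmLI b b (b ^ 3) := by
      obtain ⟨s₂, hs₂, hc₂⟩ := acm_exists_fac hb 3 1 2 one_ne_zero le_rfl (by omega)
      obtain ⟨s₃, hs₃, hc₃⟩ := acm_exists_fac hb 3 1 3 one_ne_zero (by omega) le_rfl
      rw [mul_one] at hs₂ hs₃
      exact ⟨2, ⟨s₂, hs₂, hc₂⟩, 3, ⟨s₃, hs₃, hc₃⟩, by omega⟩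
    have hset : {r : ℝ | ∃ x : ℕ, acmMem b b x ∧ acmLI b b x ∧ r = acmLD b b x} = {1} := by
      ext r
      simp only [Set.mem_setOf_eq, Set.mem_singleton_iff]
      constructor
      · rintro ⟨x, hx, hLIx, rfl⟩
        exact acm_LD_eq_one hb hx hLIx
      · rintro rfl
        exact ⟨b ^ 3, hmem, hLI, (acm_LD_eq_one hb hmem hLI).symm⟩
    rw [hset, csInf_singleton]
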